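/- arXiv:2503.22189 — 2 statements merged into one kernel-verified Lean document; each statement's English description precedes it below -/
import Mathlib

section
/- Let (μ_n) and μ be σ-finite positive Borel measures on (0,∞) whose Laplace transforms h_{μ_n}(t) = ∫₀^∞ e^{-tx} dμ_n(x) and h_μ(t) = ∫₀^∞ e^{-tx} dμ(x) are finite for all t > 0, and suppose h_{μ_n}(t) → h_μ(t) as n → ∞ for every t > 0. Set h_{ν_n}(u) = ∫₀^∞ x e^{-ux} dμ_n(x) and h_ν(u) = ∫₀^∞ x e^{-ux} dμ(x). Then for every continuous g : ℝ → ℂ with compact support contained in (0,∞), ∫₀^∞ |∫₀^∞ h_{ν_n}(t+s) g(s) ds − ∫₀^∞ h_ν(t+s) g(s) ds|² dt → 0 as n → ∞. -/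
open MeasureTheory Set Filter
open scoped ENNReal


noncomputable def Hh (m : Measure ℝ) (u : ℝ) : ℝ := ∫ x in Ioi (0:ℝ), Real.exp (-u * x) ∂m
noncomputable def Nn (m : Measure ℝ) (u : ℝ) : ℝ := ∫ x in Ioi (0:ℝ), x * Real.exp (-u * x) ∂m

lemma yexp_le_one {y : ℝ} (hy : 0 ≤ y) : y * Real.exp (-y) ≤ 1 := by
  have h1 : y ≤ Real.exp y := by linarith [Real.add_one_le_exp y]
  calc y * Real.exp (-y) ≤ Real.exp y * Real.exp (-y) := by gcongr
    _ = 1 := by rw [← Real.exp_add]; simp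

lemma xexp_le {u x : ℝ} (hu : 0 < u) (hx : 0 ≤ x) :
    x * Real.exp (-u * x) ≤ (2 / u) * Real.exp (-(u / 2) * x) := by
  have h1 : (u / 2 * x) * Real.exp (-(u / 2 * x)) ≤ 1 := yexp_le_one (by positivity)
  have h2 : x * Real.exp (-(u / 2) * x) ≤ 2 / u := by
    have he : -(u / 2) * x = -(u / 2 * x) := by ring
    rw [he, le_div_iff₀ hu]
    nlinarith [Real.exp_pos (-(u / 2 * x))]
  have h3 : Real.exp (-u * x) = Real.exp (-(u/2) * x) * Real.exp (-(u/2) * x) := by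
    rw [← Real.exp_add]; ring_nf
  calc x * Real.exp (-u*x) = (x * Real.exp (-(u/2)*x)) * Real.exp (-(u/2)*x) := by
        rw [h3]; ring
    _ ≤ (2/u) * Real.exp (-(u/2)*x) := by gcongr

section
variable {m : Measure ℝ}

def FinLap (m : Measure ℝ) : Prop := ∀ t : ℝ, 0 < t →
  ∫⁻ x in Ioi (0:ℝ), ENNReal.ofReal (Real.exp (-t * x)) ∂m < ⊤

lemma int_exp (hm : FinLap m) {u : ℝ} (hu : 0 < u) :
    IntegrableOn (fun x => Real.exp (-u * x)) (Ioi 0) m := by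
  refine ⟨(Continuous.aestronglyMeasurable (by continuity)), ?_⟩
  rw [hasFiniteIntegral_iff_ofReal (ae_of_all _ fun x => (Real.exp_pos _).le)]
  exact hm u hu

lemma int_xexp (hm : FinLap m) {u : ℝ} (hu : 0 < u) :
    IntegrableOn (fun x => x * Real.exp (-u * x)) (Ioi 0) m := by
  have h2 : IntegrableOn (fun x => (2/u) * Real.exp (-(u/2) * x)) (Ioi 0) m :=
    (int_exp hm (half_pos hu)).const_mul _
  refine h2.mono' (Continuous.aestronglyMeasurable (by continuity)) ?_
  filter_upwards [ae_restrict_mem measurableSet_Ioi] with x hx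
  rw [Real.norm_eq_abs, abs_of_nonneg (mul_nonneg (le_of_lt hx) (Real.exp_pos _).le)]
  exact xexp_le hu (le_of_lt hx)

lemma Hh_nonneg (u : ℝ) : 0 ≤ Hh m u :=
  setIntegral_nonneg measurableSet_Ioi fun x _ => (Real.exp_pos _).le

lemma Nn_nonneg (u : ℝ) : 0 ≤ Nn m u :=
  setIntegral_nonneg measurableSet_Ioi fun x hx =>
    mul_nonneg (le_of_lt (mem_Ioi.1 hx)) (Real.exp_pos _).le

lemma Hh_anti (hm : FinLap m) {v u : ℝ} (hv : 0 < v) (hvu : v ≤ u) : Hh m u ≤ Hh m v := by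
  refine setIntegral_mono_on (int_exp hm (lt_of_lt_of_le hv hvu)) (int_exp hm hv)
    measurableSet_Ioi fun x hx => ?_
  exact Real.exp_le_exp.2 (by nlinarith [mem_Ioi.1 hx])

lemma Nn_le (hm : FinLap m) {u : ℝ} (hu : 0 < u) : Nn m u ≤ (2/u) * Hh m (u/2) := by
  rw [Nn, Hh, ← integral_const_mul]
  refine setIntegral_mono_on (int_xexp hm hu) ((int_exp hm (half_pos hu)).const_mul _)
    measurableSet_Ioi fun x hx => xexp_le hu (le_of_lt (mem_Ioi.1 hx))

end
section
variable {m : Measure ℝ}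

lemma Qlim (hm : FinLap m) {u : ℝ} (hu : 0 < u) :
    Tendsto (fun δ => ∫ x in Ioi (0:ℝ), (Real.exp (-(u-δ)*x) - Real.exp (-u*x))/δ ∂m)
      (nhdsWithin 0 (Ioi 0)) (nhds (Nn m u)) := by
  apply tendsto_integral_filter_of_dominated_convergence
    (bound := fun x => x * Real.exp (-(u/2) * x))
  · exact Eventually.of_forall fun δ =>
      (Continuous.div_const (by continuity) δ).aestronglyMeasurable
  · filter_upwards [Ioo_mem_nhdsGT_of_mem (by constructor <;> [exact le_refl 0; exact half_pos hu] : (0:ℝ) ∈ Ico 0 (u/2))] with δ hδ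
    filter_upwards [ae_restrict_mem measurableSet_Ioi] with x hx
    have hx0 : (0:ℝ) < x := hx
    have hδ0 : (0:ℝ) < δ := hδ.1
    have hmono : Real.exp (-u*x) ≤ Real.exp (-(u-δ)*x) :=
      Real.exp_le_exp.2 (by nlinarith)
    rw [Real.norm_eq_abs, abs_of_nonneg (div_nonneg (by linarith) hδ0.le), div_le_iff₀ hδ0]
    have hA : Real.exp (-(u-δ)*x) = Real.exp (-u*x) * Real.exp (δ*x) := by
      rw [← Real.exp_add]; ring_nf
    have hEi : Real.exp (-(δ*x)) * Real.exp (δ*x) = 1 := by rw [← Real.exp_add]; simp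
    have h1 : Real.exp (δ*x) - 1 ≤ δ*x*Real.exp (δ*x) := by
      nlinarith [Real.add_one_le_exp (-(δ*x)), Real.exp_pos (δ*x)]
    have h2 : Real.exp (-u*x) * Real.exp (δ*x) ≤ Real.exp (-(u/2)*x) := by
      rw [← Real.exp_add]; apply Real.exp_le_exp.2; nlinarith [hδ.2]
    have hB := Real.exp_pos (-u*x)
    calc Real.exp (-(u-δ)*x) - Real.exp (-u*x)
        = Real.exp (-u*x) * (Real.exp (δ*x) - 1) := by rw [hA]; ring
      _ ≤ Real.exp (-u*x) * (δ*x*Real.exp (δ*x)) := by gcongr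
      _ = (x * (Real.exp (-u*x) * Real.exp (δ*x))) * δ := by ring
      _ ≤ (x * Real.exp (-(u/2)*x)) * δ := by gcongr
  · exact int_xexp hm (half_pos hu)
  · refine Eventually.of_forall fun x => ?_
    have hd0 : HasDerivAt (fun δ : ℝ => -(u-δ)*x) x 0 := by
      simpa using (((hasDerivAt_id (0:ℝ)).const_sub u).neg).mul_const x
    have hd : HasDerivAt (fun δ : ℝ => Real.exp (-(u-δ)*x)) (x * Real.exp (-u*x)) 0 := by
      have := hd0.exp
      simpa [mul_comm] using this
    have hs := hasDerivAt_iff_tendsto_slope.mp hd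
    have hs2 : Tendsto (slope (fun δ : ℝ => Real.exp (-(u-δ)*x)) 0)
        (nhdsWithin 0 (Ioi 0)) (nhds (x * Real.exp (-u*x))) :=
      hs.mono_left (nhdsWithin_mono 0 (fun y hy => (ne_of_gt hy : y ≠ 0)))
    refine hs2.congr' ?_
    filter_upwards [self_mem_nhdsWithin] with δ (hδ : δ ∈ Ioi (0:ℝ))
    rw [slope_def_field]
    simp

lemma Plim (hm : FinLap m) {u : ℝ} (hu : 0 < u) :
    Tendsto (fun δ => ∫ x in Ioi (0:ℝ), (Real.exp (-u*x) - Real.exp (-(u+δ)*x))/δ ∂m)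
      (nhdsWithin 0 (Ioi 0)) (nhds (Nn m u)) := by
  apply tendsto_integral_filter_of_dominated_convergence
    (bound := fun x => x * Real.exp (-u * x))
  · exact Eventually.of_forall fun δ =>
      (Continuous.div_const (by continuity) δ).aestronglyMeasurable
  · filter_upwards [self_mem_nhdsWithin] with δ (hδ0 : δ ∈ Ioi (0:ℝ))
    filter_upwards [ae_restrict_mem measurableSet_Ioi] with x hx
    have hx0 : (0:ℝ) < x := hx
    have hδ : (0:ℝ) < δ := hδ0
    have hmono : Real.exp (-(u+δ)*x) ≤ Real.exp (-u*x) :=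
      Real.exp_le_exp.2 (by nlinarith)
    rw [Real.norm_eq_abs, abs_of_nonneg (div_nonneg (by linarith) hδ.le), div_le_iff₀ hδ]
    have hA : Real.exp (-(u+δ)*x) = Real.exp (-u*x) * Real.exp (-(δ*x)) := by
      rw [← Real.exp_add]; ring_nf
    have h1 : 1 - Real.exp (-(δ*x)) ≤ δ*x := by
      nlinarith [Real.add_one_le_exp (-(δ*x))]
    have hB := Real.exp_pos (-u*x)
    calc Real.exp (-u*x) - Real.exp (-(u+δ)*x)
        = Real.exp (-u*x) * (1 - Real.exp (-(δ*x))) := by rw [hA]; ring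
      _ ≤ Real.exp (-u*x) * (δ*x) := by gcongr
      _ = (x * Real.exp (-u*x)) * δ := by ring
  · exact int_xexp hm hu
  · refine Eventually.of_forall fun x => ?_
    have hd0 : HasDerivAt (fun δ : ℝ => -(u+δ)*x) (-x) 0 := by
      simpa using (((hasDerivAt_id (0:ℝ)).const_add u).neg).mul_const x
    have hd : HasDerivAt (fun δ : ℝ => Real.exp (-(u+δ)*x)) (-(x * Real.exp (-u*x))) 0 := by
      have := hd0.exp
      simpa [mul_comm] using this
    have hs := hasDerivAt_iff_tendsto_slope.mp hd
    have hs2 : Tendsto (fun δ => -(slope (fun δ : ℝ => Real.exp (-(u+δ)*x)) 0 δ))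
        (nhdsWithin 0 (Ioi 0)) (nhds (x * Real.exp (-u*x))) := by
      have := (hs.mono_left (nhdsWithin_mono 0 (fun y hy => (ne_of_gt hy : y ≠ 0)))).neg
      rw [neg_neg] at this; exact this
    refine hs2.congr' ?_
    filter_upwards [self_mem_nhdsWithin] with δ (hδ : δ ∈ Ioi (0:ℝ))
    rw [slope_def_field]
    simp only [add_zero, sub_zero]; ring

lemma Qident (hm : FinLap m) {u δ : ℝ} (hδ : 0 < δ) (huδ : 0 < u - δ) :
    ∫ x in Ioi (0:ℝ), (Real.exp (-(u-δ)*x) - Real.exp (-u*x))/δ ∂m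
      = (Hh m (u-δ) - Hh m u)/δ := by
  simp only [Hh]
  rw [integral_div, integral_sub (int_exp hm huδ) (int_exp hm (by linarith))]

lemma Pident (hm : FinLap m) {u δ : ℝ} (hu : 0 < u) (hδ : 0 < δ) :
    ∫ x in Ioi (0:ℝ), (Real.exp (-u*x) - Real.exp (-(u+δ)*x))/δ ∂m
      = (Hh m u - Hh m (u+δ))/δ := by
  simp only [Hh]
  rw [integral_div, integral_sub (int_exp hm hu) (int_exp hm (by linarith))]

lemma squeeze_low (hm : FinLap m) {u δ : ℝ} (hu : 0 < u) (hδ : 0 < δ) :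
    (Hh m u - Hh m (u+δ))/δ ≤ Nn m u := by
  rw [← Pident hm hu hδ]
  refine setIntegral_mono_on
    (((int_exp hm hu).sub (int_exp hm (by linarith))).div_const δ)
    (int_xexp hm hu) measurableSet_Ioi fun x hx => ?_
  have hx0 : (0:ℝ) < x := hx
  rw [div_le_iff₀ hδ]
  have hA : Real.exp (-(u+δ)*x) = Real.exp (-u*x) * Real.exp (-(δ*x)) := by
    rw [← Real.exp_add]; ring_nf
  nlinarith [Real.add_one_le_exp (-(δ*x)), Real.exp_pos (-u*x)]

lemma squeeze_high (hm : FinLap m) {u δ : ℝ} (hδ : 0 < δ) (hδu : δ < u) :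
    Nn m u ≤ (Hh m (u-δ) - Hh m u)/δ := by
  rw [← Qident hm hδ (by linarith)]
  refine setIntegral_mono_on (int_xexp hm (by linarith))
    (((int_exp hm (by linarith : (0:ℝ) < u - δ)).sub (int_exp hm (by linarith))).div_const δ)
    measurableSet_Ioi fun x hx => ?_
  have hx0 : (0:ℝ) < x := hx
  rw [le_div_iff₀ hδ]
  have hA : Real.exp (-(u-δ)*x) = Real.exp (-u*x) * Real.exp (δ*x) := by
    rw [← Real.exp_add]; ring_nf
  nlinarith [Real.add_one_le_exp (δ*x), Real.exp_pos (-u*x)]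

end

lemma keyA {μseq : ℕ → Measure ℝ} {μ : Measure ℝ}
    (hfin : ∀ n, FinLap (μseq n)) (hfin' : FinLap μ)
    (hconv : ∀ t : ℝ, 0 < t → Tendsto (fun n => Hh (μseq n) t) atTop (nhds (Hh μ t)))
    {u : ℝ} (hu : 0 < u) :
    Tendsto (fun n => Nn (μseq n) u) atTop (nhds (Nn μ u)) := by
  rw [Metric.tendsto_nhds]
  intro ε hε
  have hQ' : Tendsto (fun δ => (Hh μ (u-δ) - Hh μ u)/δ) (nhdsWithin 0 (Ioi 0))
      (nhds (Nn μ u)) := by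
    refine (Qlim hfin' hu).congr' ?_
    filter_upwards [Ioo_mem_nhdsGT_of_mem (⟨le_refl 0, half_pos hu⟩ : (0:ℝ) ∈ Ico 0 (u/2))]
      with δ hδ
    exact Qident hfin' hδ.1 (by linarith [hδ.2])
  have hP' : Tendsto (fun δ => (Hh μ u - Hh μ (u+δ))/δ) (nhdsWithin 0 (Ioi 0))
      (nhds (Nn μ u)) := by
    refine (Plim hfin' hu).congr' ?_
    filter_upwards [self_mem_nhdsWithin] with δ (hδ : δ ∈ Ioi (0:ℝ))
    exact Pident hfin' hu hδ
  have hC : ∀ᶠ δ in nhdsWithin (0:ℝ) (Ioi 0), δ ∈ Ioo 0 (u/2) :=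
    Ioo_mem_nhdsGT_of_mem ⟨le_refl 0, half_pos hu⟩
  obtain ⟨δ, hδQ, hδP, hδm⟩ :=
    ((Metric.tendsto_nhds.mp hQ' (ε/2) (by positivity)).and
      ((Metric.tendsto_nhds.mp hP' (ε/2) (by positivity)).and hC)).exists
  have hδ0 : 0 < δ := hδm.1
  have hδu : δ < u := lt_trans hδm.2 (by linarith)
  have huδ : 0 < u - δ := by linarith
  have TQ : Tendsto (fun n => (Hh (μseq n) (u-δ) - Hh (μseq n) u)/δ) atTop
      (nhds ((Hh μ (u-δ) - Hh μ u)/δ)) := ((hconv (u-δ) huδ).sub (hconv u hu)).div_const δ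
  have TP : Tendsto (fun n => (Hh (μseq n) u - Hh (μseq n) (u+δ))/δ) atTop
      (nhds ((Hh μ u - Hh μ (u+δ))/δ)) :=
    ((hconv u hu).sub (hconv (u+δ) (by linarith))).div_const δ
  filter_upwards [Metric.tendsto_nhds.mp TQ (ε/2) (by positivity),
    Metric.tendsto_nhds.mp TP (ε/2) (by positivity)] with n h1 h2
  have sqL := squeeze_low (hfin n) hu hδ0
  have sqH := squeeze_high (hfin n) hδ0 hδu
  rw [Real.dist_eq] at h1 h2 hδQ hδP ⊢
  have h1' := abs_lt.1 h1
  have h2' := abs_lt.1 h2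
  have hδQ' := abs_lt.1 hδQ
  have hδP' := abs_lt.1 hδP
  rw [abs_lt]
  constructor <;> nlinarith
lemma measNn (m : Measure ℝ) [SigmaFinite m] : StronglyMeasurable (Nn m) := by
  have hc : Continuous (fun p : ℝ × ℝ => p.2 * Real.exp (-p.1 * p.2)) := by continuity
  exact hc.stronglyMeasurable.integral_prod_right'

lemma measF (m : Measure ℝ) [SigmaFinite m] (g : ℝ → ℂ) (hg : Continuous g) :
    AEStronglyMeasurable (fun t => ∫ s in Ioi (0:ℝ), ((Nn m (t+s) : ℝ) : ℂ) * g s)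
      (volume.restrict (Ioi 0)) := by
  have h1 : StronglyMeasurable (fun p : ℝ × ℝ => ((Nn m (p.1 + p.2) : ℝ) : ℂ) * g p.2) := by
    apply Measurable.stronglyMeasurable
    exact (Complex.measurable_ofReal.comp
      ((measNn m).measurable.comp measurable_add)).mul (hg.measurable.comp measurable_snd)
  exact h1.integral_prod_right'.aestronglyMeasurable

lemma invsq_int {a : ℝ} (ha : 0 < a) :
    IntegrableOn (fun t : ℝ => ((t + a) ^ 2)⁻¹) (Ioi 0) := by
  have hmeas : ∀ s : Set ℝ, s ⊆ Ioi 0 → AEStronglyMeasurable (fun t : ℝ => ((t + a) ^ 2)⁻¹)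
      (volume.restrict s) := by
    intro s hs
    apply Measurable.aestronglyMeasurable
    exact (((measurable_id.add_const a).pow_const 2).inv)
  rw [← Ioc_union_Ioi_eq_Ioi (zero_le_one)]
  refine IntegrableOn.union ?_ ?_
  · refine Integrable.mono' (integrable_const ((a^2)⁻¹)) (hmeas _ Ioc_subset_Ioi_self) ?_
    filter_upwards [ae_restrict_mem measurableSet_Ioc] with t ht
    rw [Real.norm_eq_abs, abs_of_nonneg (by positivity)]
    have h1 : a^2 ≤ (t+a)^2 := by nlinarith [ht.1]
    exact inv_anti₀ (by positivity) h1
  · refine Integrable.mono' (integrableOn_Ioi_rpow_of_lt (by norm_num : (-2:ℝ) < -1) one_pos)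
      (hmeas _ (fun t ht => mem_Ioi.2 (lt_trans one_pos (mem_Ioi.1 ht)))) ?_
    filter_upwards [ae_restrict_mem measurableSet_Ioi] with t ht
    have ht1 : (1:ℝ) < t := ht
    rw [Real.norm_eq_abs, abs_of_nonneg (by positivity)]
    rw [show (-2:ℝ) = -(2:ℕ) by norm_num, Real.rpow_neg (by linarith), Real.rpow_natCast]
    have h1 : t^2 ≤ (t+a)^2 := by nlinarith
    exact inv_anti₀ (by positivity) h1

/-- if the Laplace transforms `h_{μₙ}` converge pointwise to `h_μ` on `(0,∞)`,
then for every continuous `g` compactly supported in `(0,∞)` the Hankel images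
`Γ_{νₙ} g` converge to `Γ_ν g` in `L²(0,∞)`, where `dνₙ = x dμₙ`, `dν = x dμ`. -/
theorem hankel_strong_convergence (μseq : ℕ → Measure ℝ) (μ : Measure ℝ)
    [∀ n, SigmaFinite (μseq n)] [SigmaFinite μ]
    (hfin : ∀ n, ∀ t : ℝ, 0 < t →
      ∫⁻ x in Ioi (0:ℝ), ENNReal.ofReal (Real.exp (-t * x)) ∂(μseq n) < ⊤)
    (hfin' : ∀ t : ℝ, 0 < t →
      ∫⁻ x in Ioi (0:ℝ), ENNReal.ofReal (Real.exp (-t * x)) ∂μ < ⊤)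
    (hconv : ∀ t : ℝ, 0 < t →
      Tendsto (fun n => ∫ x in Ioi (0:ℝ), Real.exp (-t * x) ∂(μseq n)) atTop
        (nhds (∫ x in Ioi (0:ℝ), Real.exp (-t * x) ∂μ)))
    (g : ℝ → ℂ) (hg : Continuous g) (hgc : HasCompactSupport g)
    (hgs : tsupport g ⊆ Ioi (0:ℝ)) :
    Tendsto (fun n => ∫ t in Ioi (0:ℝ),
        ‖(∫ s in Ioi (0:ℝ),
            ((∫ x in Ioi (0:ℝ), x * Real.exp (-(t + s) * x) ∂(μseq n) : ℝ) : ℂ) * g s)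
          - ∫ s in Ioi (0:ℝ),
              ((∫ x in Ioi (0:ℝ), x * Real.exp (-(t + s) * x) ∂μ : ℝ) : ℂ) * g s‖ ^ 2)
      atTop (nhds 0) := by
  by_cases hg0 : g = 0
  · subst hg0
    simpa using tendsto_const_nhds
  have hFin : ∀ n, FinLap (μseq n) := hfin
  have hFin' : FinLap μ := hfin'
  have hHconv : ∀ t : ℝ, 0 < t → Tendsto (fun n => Hh (μseq n) t) atTop (nhds (Hh μ t)) := hconv
  have hne : (tsupport g).Nonempty := by
    rcases Set.eq_empty_or_nonempty (tsupport g) with h | h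
    · exact absurd (funext fun x => image_eq_zero_of_notMem_tsupport (by simp [h])) hg0
    · exact h
  set a := sInf (tsupport g) with ha_def
  have hamem : a ∈ tsupport g := (isClosed_tsupport g).csInf_mem hne hgc.isCompact.bddBelow
  have ha : 0 < a := hgs hamem
  have hales : ∀ s, g s ≠ 0 → a ≤ s := fun s hs =>
    csInf_le hgc.isCompact.bddBelow (subset_tsupport g hs)
  obtain ⟨S0, hS0⟩ := (hHconv (a/2) (half_pos ha)).bddAbove_range
  set S := max S0 (Hh μ (a/2)) with hS_def
  have hS : ∀ n, Hh (μseq n) (a/2) ≤ S := fun n => le_max_of_le_left (hS0 (mem_range_self n))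
  have hSμ : Hh μ (a/2) ≤ S := le_max_right _ _
  have hSnn : 0 ≤ S := le_trans (Hh_nonneg _) hSμ
  have hgi : Integrable g := hg.integrable_of_hasCompactSupport hgc
  set Ig := ∫ s in Ioi (0:ℝ), ‖g s‖ with hIg_def
  have hIg : 0 ≤ Ig := setIntegral_nonneg measurableSet_Ioi fun s _ => norm_nonneg _
  have hptb : ∀ (m : Measure ℝ), FinLap m → Hh m (a/2) ≤ S → ∀ t : ℝ, 0 ≤ t → ∀ s : ℝ, 0 < s →
      ‖((Nn m (t+s) : ℝ):ℂ) * g s‖ ≤ (2*S/(t+a)) * ‖g s‖ := by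
    intro m hm hmS t ht s hs
    rw [norm_mul, Complex.norm_real, Real.norm_eq_abs, abs_of_nonneg (Nn_nonneg _)]
    by_cases hgz : g s = 0
    · simp [hgz]
    · have has : a ≤ s := hales s hgz
      have hts : 0 < t + s := by linarith
      have hta : 0 < t + a := by linarith
      have h4 : Nn m (t+s) ≤ 2*S/(t+a) := by
        have h1 : Nn m (t+s) ≤ (2/(t+s)) * Hh m ((t+s)/2) := Nn_le hm hts
        have h2 : Hh m ((t+s)/2) ≤ Hh m (a/2) := Hh_anti hm (half_pos ha) (by linarith)
        have hH0 : (0:ℝ) ≤ Hh m (a/2) := Hh_nonneg _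
        have hdiv : (2:ℝ)/(t+s) ≤ 2/(t+a) := by gcongr <;> linarith
        calc Nn m (t+s) ≤ (2/(t+s)) * Hh m (a/2) :=
              le_trans h1 (mul_le_mul_of_nonneg_left h2 (by positivity))
          _ ≤ (2/(t+a)) * S := mul_le_mul hdiv hmS hH0 (by positivity)
          _ = 2*S/(t+a) := by ring
      gcongr
  have hkb : ∀ (m : Measure ℝ), FinLap m → Hh m (a/2) ≤ S → ∀ t : ℝ, 0 ≤ t →
      ‖∫ s in Ioi (0:ℝ), ((Nn m (t+s) : ℝ):ℂ) * g s‖ ≤ (2*S/(t+a)) * Ig := by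
    intro m hm hmS t ht
    rw [hIg_def, ← integral_const_mul]
    refine norm_integral_le_of_norm_le ((hgi.norm.integrableOn).const_mul _) ?_
    filter_upwards [ae_restrict_mem measurableSet_Ioi] with s hs
    exact hptb m hm hmS t ht s hs
  have main : Tendsto (fun n => ∫ t in Ioi (0:ℝ),
      ‖(∫ s in Ioi (0:ℝ), ((Nn (μseq n) (t+s) : ℝ):ℂ) * g s)
        - ∫ s in Ioi (0:ℝ), ((Nn μ (t+s) : ℝ):ℂ) * g s‖^2) atTop
      (nhds (∫ t in Ioi (0:ℝ), (0:ℝ))) := by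
    apply tendsto_integral_of_dominated_convergence (bound := fun t => ((4*S*Ig)/(t+a))^2)
    · intro n
      have X := ((measF (μseq n) g hg).sub (measF μ g hg)).norm
      exact X.pow 2
    · have h2 : IntegrableOn (fun t : ℝ => (4*S*Ig)^2 * ((t+a)^2)⁻¹) (Ioi 0) :=
        (invsq_int ha).const_mul _
      refine h2.congr_fun (fun t _ => ?_) measurableSet_Ioi
      rw [div_pow, div_eq_mul_inv]
    · intro n
      filter_upwards [ae_restrict_mem measurableSet_Ioi] with t ht
      have ht0 : (0:ℝ) ≤ t := le_of_lt ht
      have b1 := hkb (μseq n) (hFin n) (hS n) t ht0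
      have b2 := hkb μ hFin' hSμ t ht0
      have hta : 0 < t + a := by linarith
      have hD : ‖(∫ s in Ioi (0:ℝ), ((Nn (μseq n) (t+s) : ℝ):ℂ) * g s)
          - ∫ s in Ioi (0:ℝ), ((Nn μ (t+s) : ℝ):ℂ) * g s‖ ≤ (4*S*Ig)/(t+a) := by
        refine le_trans (norm_sub_le _ _) ?_
        calc ‖∫ s in Ioi (0:ℝ), ((Nn (μseq n) (t+s) : ℝ):ℂ) * g s‖
              + ‖∫ s in Ioi (0:ℝ), ((Nn μ (t+s) : ℝ):ℂ) * g s‖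
            ≤ (2*S/(t+a)) * Ig + (2*S/(t+a)) * Ig := add_le_add b1 b2
          _ = (4*S*Ig)/(t+a) := by field_simp; ring
      rw [Real.norm_eq_abs, abs_of_nonneg (by positivity)]
      exact pow_le_pow_left₀ (norm_nonneg _) hD 2
    · filter_upwards [ae_restrict_mem measurableSet_Ioi] with t ht
      have ht0 : (0:ℝ) < t := ht
      have hFt : Tendsto (fun n => ∫ s in Ioi (0:ℝ), ((Nn (μseq n) (t+s) : ℝ):ℂ) * g s) atTop
          (nhds (∫ s in Ioi (0:ℝ), ((Nn μ (t+s) : ℝ):ℂ) * g s)) := by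
        apply tendsto_integral_of_dominated_convergence (bound := fun s => (2*S/a) * ‖g s‖)
        · intro n
          apply Measurable.aestronglyMeasurable
          exact (Complex.measurable_ofReal.comp ((measNn (μseq n)).measurable.comp
            (measurable_const.add measurable_id))).mul hg.measurable
        · exact (hgi.norm.integrableOn).const_mul _
        · intro n
          filter_upwards [ae_restrict_mem measurableSet_Ioi] with s hs
          refine le_trans (hptb (μseq n) (hFin n) (hS n) t (le_of_lt ht0) s hs) ?_
          gcongr
          linarith
        · filter_upwards [ae_restrict_mem measurableSet_Ioi] with s hs
          have hs0 : (0:ℝ) < s := hs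
          have hk := keyA hFin hFin' hHconv (show (0:ℝ) < t + s by linarith)
          exact ((Complex.continuous_ofReal.tendsto _).comp hk).mul_const (g s)
      have h0 : Tendsto (fun n => (∫ s in Ioi (0:ℝ), ((Nn (μseq n) (t+s) : ℝ):ℂ) * g s)
          - ∫ s in Ioi (0:ℝ), ((Nn μ (t+s) : ℝ):ℂ) * g s) atTop (nhds 0) := by
        simpa using hFt.sub_const (∫ s in Ioi (0:ℝ), ((Nn μ (t+s) : ℝ):ℂ) * g s)
      have h1 := (h0.norm).pow 2
      simpa using h1
  rw [integral_zero] at main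
  exact main
end

section
/- Define h : (0,∞) → ℝ by h(t) = (1/π) ∫₀^1 e^{-πtλ} arcosh(1/λ) dλ, where arcosh is the inverse hyperbolic cosine. Then h(t) = (1/π²)·(log t)/t·(1 + o(1)) as t → ∞; equivalently, π² t h(t)/log t → 1 as t → ∞. In particular, the estimate h(t) ≤ C/t fails as t → ∞ for every constant C. -/
open MeasureTheory Set Filter
open scoped Real

/-- The inverse hyperbolic cosine, `arcosh x = log (x + √(x² - 1))`. -/
noncomputable def arcosh (x : ℝ) : ℝ := Real.log (x + Real.sqrt (x ^ 2 - 1))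

/-- The kernel function `h(t) = (1/π) ∫₀¹ e^{-πtλ} arcosh(1/λ) dλ` of the Hankel operator
whose spectral measure is `e^{-2λ} dλ`. -/
noncomputable def mehlerDualKernel (t : ℝ) : ℝ :=
  (1 / π) * ∫ l in Ioc (0:ℝ) 1, Real.exp (-(π * t * l)) * arcosh (1 / l)

lemma arcosh_ge {l : ℝ} (hl0 : 0 < l) : -Real.log l ≤ arcosh (1/l) := by
  rw [arcosh, ← Real.log_inv, ← one_div]
  exact Real.log_le_log (by positivity) (le_add_of_nonneg_right (Real.sqrt_nonneg _))

lemma arcosh_le {l : ℝ} (hl0 : 0 < l) : arcosh (1/l) ≤ Real.log 2 - Real.log l := by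
  rw [arcosh]
  have h1 : Real.sqrt ((1/l)^2 - 1) ≤ 1/l := by
    calc Real.sqrt ((1/l)^2 - 1) ≤ Real.sqrt ((1/l)^2) := Real.sqrt_le_sqrt (by linarith)
      _ = 1/l := Real.sqrt_sq (by positivity)
  calc Real.log (1/l + Real.sqrt ((1/l)^2 - 1)) ≤ Real.log (2 * (1/l)) := by
        apply Real.log_le_log (by positivity); linarith
    _ = Real.log 2 - Real.log l := by
        rw [Real.log_mul (by norm_num) (by positivity), one_div, Real.log_inv]; ring

lemma arcosh_nonneg {l : ℝ} (hl0 : 0 < l) (hl1 : l ≤ 1) : 0 ≤ arcosh (1/l) := by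
  rw [arcosh]
  apply Real.log_nonneg
  have : (1:ℝ) ≤ 1/l := one_le_one_div hl0 hl1
  nlinarith [Real.sqrt_nonneg ((1/l)^2 - 1)]

lemma neg_log_le_rpow {x : ℝ} (hx : 0 < x) : -Real.log x ≤ 2 * x ^ (-(1/2) : ℝ) := by
  have h1 : Real.log (x ^ (-(1/2):ℝ)) = -(1/2) * Real.log x := Real.log_rpow hx _
  have h2 : Real.log (x ^ (-(1/2):ℝ)) ≤ x ^ (-(1/2):ℝ) - 1 :=
    Real.log_le_sub_one_of_pos (by positivity)
  nlinarith [Real.rpow_pos_of_pos hx (-(1/2):ℝ)]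

lemma rpow_integrableOn {c : ℝ} (hc : 0 ≤ c) :
    IntegrableOn (fun l : ℝ => l ^ (-(1/2) : ℝ)) (Ioc 0 c) := by
  rw [← intervalIntegrable_iff_integrableOn_Ioc_of_le hc]
  exact intervalIntegral.intervalIntegrable_rpow' (by norm_num)

lemma rpow_integral {c : ℝ} (hc : 0 ≤ c) :
    ∫ l in Ioc (0:ℝ) c, l ^ (-(1/2) : ℝ) = 2 * c ^ ((1/2) : ℝ) := by
  rw [← intervalIntegral.integral_of_le hc, integral_rpow (Or.inl (by norm_num))]
  rw [Real.zero_rpow (by norm_num)]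
  norm_num
  ring

lemma exp_integral {s c : ℝ} (hs : 0 < s) (hc : 0 ≤ c) :
    ∫ l in Ioc (0:ℝ) c, Real.exp (-(s*l)) = (1 - Real.exp (-(s*c)))/s := by
  rw [← intervalIntegral.integral_of_le hc]
  have key : ∀ x ∈ Set.uIcc (0:ℝ) c, HasDerivAt (fun y => -Real.exp (-(s*y))/s)
      (Real.exp (-(s*x))) x := by
    intro x _
    have h1 : HasDerivAt (fun y : ℝ => -(s*y)) (-s) x := by
      have h := ((hasDerivAt_id x).const_mul s).neg; rw [mul_one] at h; exact h
    have h2 := (h1.exp.neg).div_const s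
    exact h2.congr_deriv (by rw [div_eq_iff hs.ne']; ring)
  rw [intervalIntegral.integral_eq_sub_of_hasDerivAt key
    (Continuous.intervalIntegrable (by continuity) _ _)]
  simp [mul_zero]
  field_simp
  ring

lemma kernel_measurable : Measurable (fun l : ℝ => arcosh (1/l)) := by
  unfold arcosh
  apply Real.measurable_log.comp
  apply Measurable.add
  · exact measurable_const.div measurable_id
  · exact Real.continuous_sqrt.measurable.comp
      (((measurable_const.div measurable_id).pow_const 2).sub measurable_const)

lemma kernel_integrableOn {s : ℝ} (hs : 0 ≤ s) :
    IntegrableOn (fun l => Real.exp (-(s*l)) * arcosh (1/l)) (Ioc (0:ℝ) 1) := by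
  apply Integrable.mono' (g := fun l => Real.log 2 + 2 * l ^ (-(1/2):ℝ))
  · exact (integrable_const _).add ((rpow_integrableOn zero_le_one).const_mul 2)
  · exact ((Real.measurable_exp.comp (measurable_const.mul measurable_id).neg).mul
      kernel_measurable).aestronglyMeasurable
  · rw [ae_restrict_iff' measurableSet_Ioc]
    filter_upwards with l hl
    have hl0 := hl.1
    have harc0 : 0 ≤ arcosh (1/l) := arcosh_nonneg hl0 hl.2
    have hexple : Real.exp (-(s*l)) ≤ 1 := Real.exp_le_one_iff.2 (by nlinarith)
    have harcle := arcosh_le hl0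
    have hlog := neg_log_le_rpow hl0
    rw [Real.norm_eq_abs, abs_of_nonneg (by positivity)]
    nlinarith [Real.exp_pos (-(s*l))]

lemma upper_bound {s : ℝ} (hs : 1 ≤ s) :
    ∫ l in Ioc (0:ℝ) 1, Real.exp (-(s*l)) * arcosh (1/l)
      ≤ (Real.log 2 + Real.log s + 4)/s := by
  have hs0 : 0 < s := lt_of_lt_of_le one_pos hs
  have hinv0 : (0:ℝ) ≤ 1/s := by positivity
  have hinv1 : 1/s ≤ 1 := by rw [div_le_one hs0]; exact hs
  set r : ℝ := -(1/2) with hr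
  set G : ℝ → ℝ := fun l => (Real.log 2 + Real.log s) * Real.exp (-(s*l))
      + (Ioc (0:ℝ) (1/s)).indicator (fun l => 2 * (s*l) ^ r) l with hG
  have hexpInt : IntegrableOn (fun l => (Real.log 2 + Real.log s) * Real.exp (-(s*l)))
      (Ioc (0:ℝ) 1) := (Continuous.integrableOn_Ioc (by continuity))
  have hgInt : IntegrableOn (fun l => 2 * (s*l) ^ r) (Ioc (0:ℝ) (1/s)) := by
    apply IntegrableOn.congr_fun ((rpow_integrableOn hinv0).const_mul (2 * s ^ r))
    · intro l hl
      simp only [Real.mul_rpow hs0.le hl.1.le, hr]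
      ring
    · exact measurableSet_Ioc
  have hindInt : Integrable ((Ioc (0:ℝ) (1/s)).indicator (fun l => 2 * (s*l) ^ r)) :=
    (integrable_indicator_iff measurableSet_Ioc).2 hgInt
  have hGInt : IntegrableOn G (Ioc (0:ℝ) 1) := hexpInt.add hindInt.integrableOn
  have hpt : ∀ l ∈ Ioc (0:ℝ) 1, Real.exp (-(s*l)) * arcosh (1/l) ≤ G l := by
    intro l hl
    have hl0 := hl.1
    have he1 : Real.exp (-(s*l)) ≤ 1 := Real.exp_le_one_iff.2 (by nlinarith)
    have he0 : (0:ℝ) < Real.exp (-(s*l)) := Real.exp_pos _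
    have harcle := arcosh_le hl0
    by_cases hcase : l ≤ 1/s
    · have hmem : l ∈ Ioc (0:ℝ) (1/s) := ⟨hl0, hcase⟩
      have hsl0 : 0 < s*l := by positivity
      have hsl1 : s*l ≤ 1 := by
        calc s*l ≤ s*(1/s) := by nlinarith
          _ = 1 := by field_simp
      have hlm : Real.log (s*l) = Real.log s + Real.log l :=
        Real.log_mul hs0.ne' hl0.ne'
      have hnn : 0 ≤ -Real.log (s*l) := by
        simpa using Real.log_nonpos hsl0.le hsl1
      have hbd : -Real.log (s*l) ≤ 2 * (s*l) ^ r := neg_log_le_rpow hsl0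
      rw [hG]
      simp only [Set.indicator_of_mem hmem]
      nlinarith
    · have hmem : l ∉ Ioc (0:ℝ) (1/s) := fun h => hcase h.2
      have hsl1 : 1 ≤ s*l := by
        rw [not_le] at hcase
        calc (1:ℝ) = s*(1/s) := by field_simp
          _ ≤ s*l := by nlinarith
      have hlm : Real.log (s*l) = Real.log s + Real.log l :=
        Real.log_mul hs0.ne' hl0.ne'
      have hnn : 0 ≤ Real.log (s*l) := Real.log_nonneg hsl1
      rw [hG]
      simp only [Set.indicator_of_notMem hmem]
      nlinarith
  have hmono := setIntegral_mono_on (kernel_integrableOn hs0.le) hGInt measurableSet_Ioc hpt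
  have hEq : ∫ l in Ioc (0:ℝ) 1, G l
      = (Real.log 2 + Real.log s) * ((1 - Real.exp (-(s*1)))/s) + 4/s := by
    rw [hG]
    rw [integral_add hexpInt hindInt.integrableOn]
    congr 1
    · rw [integral_const_mul, exp_integral hs0 zero_le_one]
    · rw [setIntegral_indicator measurableSet_Ioc]
      have hset : Ioc (0:ℝ) 1 ∩ Ioc (0:ℝ) (1/s) = Ioc (0:ℝ) (1/s) := by
        rw [Set.Ioc_inter_Ioc, max_self, min_eq_right hinv1]
      rw [hset]
      have hcong : ∫ l in Ioc (0:ℝ) (1/s), 2 * (s*l) ^ r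
          = ∫ l in Ioc (0:ℝ) (1/s), (2 * s ^ r) * l ^ r := by
        apply setIntegral_congr_fun measurableSet_Ioc
        intro l hl
        simp only [Real.mul_rpow hs0.le hl.1.le, hr]
        ring
      rw [hcong, integral_const_mul, rpow_integral hinv0]
      have h1 : (1/s : ℝ) ^ ((1/2):ℝ) = s ^ (-(1/2):ℝ) := by
        rw [one_div, Real.inv_rpow hs0.le, ← Real.rpow_neg hs0.le]
      rw [h1, hr]
      have h2 : s ^ (-(1/2):ℝ) * s ^ (-(1/2):ℝ) = s⁻¹ := by
        rw [← Real.rpow_add hs0]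
        norm_num
        exact Real.rpow_neg_one s
      calc 2 * s ^ (-(1/2):ℝ) * (2 * s ^ (-(1/2):ℝ))
          = 4 * (s ^ (-(1/2):ℝ) * s ^ (-(1/2):ℝ)) := by ring
        _ = 4/s := by rw [h2]; rw [div_eq_mul_inv]
  rw [hEq] at hmono
  refine hmono.trans ?_
  have hlog2 : (0:ℝ) ≤ Real.log 2 + Real.log s := by
    have h1 : (0:ℝ) ≤ Real.log 2 := Real.log_nonneg (by norm_num)
    linarith [Real.log_nonneg hs]
  have hexp : 0 < Real.exp (-(s*1)) := Real.exp_pos _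
  rw [← mul_div_assoc, ← add_div]
  gcongr
  nlinarith

lemma lower_bound {s : ℝ} (hs : 3 ≤ s) :
    (Real.log s - Real.log (Real.log s)) * (1 - 1/s) / s
      ≤ ∫ l in Ioc (0:ℝ) 1, Real.exp (-(s*l)) * arcosh (1/l) := by
  have hs0 : 0 < s := by linarith
  have hlog1 : 1 < Real.log s := by
    rw [Real.lt_log_iff_exp_lt hs0]
    have := Real.exp_one_lt_d9
    linarith
  have hlogpos : 0 < Real.log s := by linarith
  set d : ℝ := Real.log s / s with hd
  have hd0 : 0 < d := by positivity
  have hd1 : d ≤ 1 := by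
    rw [hd, div_le_one hs0]
    linarith [Real.log_le_sub_one_of_pos hs0]
  have hlogd : Real.log d = Real.log (Real.log s) - Real.log s :=
    Real.log_div hlogpos.ne' hs0.ne'
  have hnld : 0 ≤ -Real.log d := by
    simpa using Real.log_nonpos hd0.le hd1
  -- step A : constant lower bound on Ioc 0 d
  have hA : ∫ l in Ioc (0:ℝ) d, (-Real.log d) * Real.exp (-(s*l))
      ≤ ∫ l in Ioc (0:ℝ) d, Real.exp (-(s*l)) * arcosh (1/l) := by
    apply setIntegral_mono_on
    · exact Continuous.integrableOn_Ioc (by continuity)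
    · exact (kernel_integrableOn hs0.le).mono_set (Ioc_subset_Ioc_right hd1)
    · exact measurableSet_Ioc
    · intro l hl
      have hl0 := hl.1
      have he0 : (0:ℝ) < Real.exp (-(s*l)) := Real.exp_pos _
      have h1 : -Real.log d ≤ -Real.log l := by
        have := Real.log_le_log hl0 hl.2
        linarith
      have h2 := arcosh_ge hl0
      nlinarith
  -- step B : extend to Ioc 0 1
  have hB : ∫ l in Ioc (0:ℝ) d, Real.exp (-(s*l)) * arcosh (1/l)
      ≤ ∫ l in Ioc (0:ℝ) 1, Real.exp (-(s*l)) * arcosh (1/l) := by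
    apply setIntegral_mono_set (kernel_integrableOn hs0.le)
    · rw [EventuallyLE, ae_restrict_iff' measurableSet_Ioc]
      filter_upwards with l hl
      have := arcosh_nonneg hl.1 hl.2
      positivity
    · exact HasSubset.Subset.eventuallyLE (Ioc_subset_Ioc_right hd1)
  -- step C : compute the constant integral
  have hsd : s * d = Real.log s := by
    rw [hd]; field_simp
  have hC : ∫ l in Ioc (0:ℝ) d, (-Real.log d) * Real.exp (-(s*l))
      = (Real.log s - Real.log (Real.log s)) * (1 - 1/s) / s := by
    rw [integral_const_mul, exp_integral hs0 hd0.le, hsd]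
    rw [Real.exp_neg, Real.exp_log hs0, hlogd]
    rw [← one_div]
    ring
  rw [hC] at hA
  exact hA.trans hB

/-- `h(t) = (1/π²) (log t)/t (1 + o(1))` as `t → ∞`, i.e.
`π² t h(t)/log t → 1`; in particular the estimate `h(t) ≤ C/t` fails at infinity for
every constant `C`. -/
theorem mehlerDualKernel_asymptotics :
    Tendsto (fun t => π ^ 2 * t * mehlerDualKernel t / Real.log t) atTop (nhds 1)
    ∧ ∀ C : ℝ, ¬ (∀ᶠ t in atTop, mehlerDualKernel t ≤ C / t) := by
  have hpi : (3:ℝ) < π := by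
    have := Real.pi_gt_d6
    linarith
  have hpi0 : (0:ℝ) < π := by linarith
  -- rewriting the kernel
  have hker : ∀ t : ℝ, π ^ 2 * t * mehlerDualKernel t
      = (π * t) * ∫ l in Ioc (0:ℝ) 1, Real.exp (-((π*t)*l)) * arcosh (1/l) := by
    intro t
    rw [mehlerDualKernel]
    have : ∀ l : ℝ, Real.exp (-(π * t * l)) = Real.exp (-((π*t)*l)) := by
      intro l; ring_nf
    field_simp
  -- part 1
  have h1 : Tendsto (fun t => π ^ 2 * t * mehlerDualKernel t / Real.log t) atTop (nhds 1) := by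
    set L : ℝ → ℝ := fun t =>
      (Real.log (π*t) - Real.log (Real.log (π*t))) * (1 - 1/(π*t)) / Real.log t with hLdef
    set U : ℝ → ℝ := fun t => (Real.log 2 + Real.log (π*t) + 4) / Real.log t with hUdef
    have hL : Tendsto L atTop (nhds 1) := by
      have tA : Tendsto (fun t : ℝ => Real.log π / Real.log t) atTop (nhds 0) :=
        tendsto_const_nhds.div_atTop Real.tendsto_log_atTop
      have tB : Tendsto (fun t : ℝ =>
          Real.log (Real.log π + Real.log t) / Real.log t) atTop (nhds 0) := by
        have hcomp : Tendsto (fun t : ℝ => Real.log π + Real.log t) atTop atTop :=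
          tendsto_atTop_add_const_left _ _ Real.tendsto_log_atTop
        have hbase := Real.tendsto_pow_log_div_mul_add_atTop 1 (-Real.log π) 1 one_ne_zero
        refine (hbase.comp hcomp).congr fun t => ?_
        simp only [Function.comp_apply, pow_one, one_mul]
        congr 1
        ring
      have tC : Tendsto (fun t : ℝ => 1/(π*t)) atTop (nhds 0) :=
        tendsto_const_nhds.div_atTop (tendsto_id.const_mul_atTop hpi0)
      have hlim : Tendsto (fun t : ℝ =>
          (1 + Real.log π / Real.log t - Real.log (Real.log π + Real.log t) / Real.log t)
            * (1 - 1/(π*t))) atTop (nhds 1) := by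
        have := (((tendsto_const_nhds (x := (1:ℝ))).add tA).sub tB).mul
          ((tendsto_const_nhds (x := (1:ℝ))).sub tC)
        simpa using this
      apply hlim.congr'
      filter_upwards [eventually_ge_atTop (3:ℝ)] with t ht
      have ht0 : (0:ℝ) < t := by linarith
      have hlt : 0 < Real.log t := Real.log_pos (by linarith)
      rw [hLdef]
      simp only
      rw [Real.log_mul hpi0.ne' ht0.ne']
      field_simp
      ring
    have hU : Tendsto U atTop (nhds 1) := by
      have hlim : Tendsto (fun t : ℝ =>
          (Real.log 2 + Real.log π + 4) / Real.log t + 1) atTop (nhds 1) := by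
        have := (tendsto_const_nhds (x := Real.log 2 + Real.log π + 4)).div_atTop
          Real.tendsto_log_atTop
        simpa using this.add (tendsto_const_nhds (x := (1:ℝ)))
      apply hlim.congr'
      filter_upwards [eventually_ge_atTop (3:ℝ)] with t ht
      have ht0 : (0:ℝ) < t := by linarith
      have hlt : 0 < Real.log t := Real.log_pos (by linarith)
      rw [hUdef]
      simp only
      rw [Real.log_mul hpi0.ne' ht0.ne']
      field_simp
      ring
    have hfL : ∀ᶠ t in atTop, L t ≤ π ^ 2 * t * mehlerDualKernel t / Real.log t := by
      filter_upwards [eventually_ge_atTop (3:ℝ)] with t ht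
      have ht0 : (0:ℝ) < t := by linarith
      have hlt : 0 < Real.log t := Real.log_pos (by linarith)
      have hs3 : (3:ℝ) ≤ π * t := by nlinarith
      have hlb := lower_bound hs3
      rw [hker t, hLdef]
      simp only
      rw [div_le_div_iff_of_pos_right hlt]
      have hs0 : (0:ℝ) < π * t := by linarith
      rw [div_le_iff₀ hs0] at hlb
      nlinarith [hlb]
    have hfU : ∀ᶠ t in atTop, π ^ 2 * t * mehlerDualKernel t / Real.log t ≤ U t := by
      filter_upwards [eventually_ge_atTop (3:ℝ)] with t ht
      have ht0 : (0:ℝ) < t := by linarith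
      have hlt : 0 < Real.log t := Real.log_pos (by linarith)
      have hs1 : (1:ℝ) ≤ π * t := by nlinarith
      have hs0 : (0:ℝ) < π * t := by linarith
      have hub := upper_bound hs1
      rw [hker t, hUdef]
      simp only
      rw [div_le_div_iff_of_pos_right hlt]
      rw [le_div_iff₀ hs0] at hub
      nlinarith [hub]
    exact tendsto_of_tendsto_of_tendsto_of_le_of_le' hL hU hfL hfU
  refine ⟨h1, fun C hC => ?_⟩
  have h2 := h1.eventually (eventually_gt_nhds (by norm_num : (1/2:ℝ) < 1))
  have h3 : ∀ᶠ t : ℝ in atTop, 2*π^2*|C| + 1 ≤ Real.log t :=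
    Real.tendsto_log_atTop.eventually_ge_atTop _
  obtain ⟨t, hCt, h2t, h3t, ht1⟩ :=
    (hC.and (h2.and (h3.and (eventually_ge_atTop (1:ℝ))))).exists
  have ht0 : (0:ℝ) < t := by linarith
  have hlt : (0:ℝ) < Real.log t := by nlinarith [abs_nonneg C, sq_nonneg π]
  have step1 : π ^ 2 * t * mehlerDualKernel t ≤ π ^ 2 * |C| := by
    calc π ^ 2 * t * mehlerDualKernel t ≤ π ^ 2 * t * (C/t) := by
          apply mul_le_mul_of_nonneg_left hCt (by positivity)
      _ = π ^ 2 * C := by field_simp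
      _ ≤ π ^ 2 * |C| := by nlinarith [le_abs_self C, sq_nonneg π]
  have step2 : π ^ 2 * t * mehlerDualKernel t / Real.log t
      ≤ π ^ 2 * |C| / (2*π^2*|C| + 1) :=
    div_le_div₀ (by positivity) step1 (by positivity) h3t
  have step3 : π ^ 2 * |C| / (2*π^2*|C| + 1) < 1/2 := by
    rw [div_lt_iff₀ (by positivity)]
    nlinarith [abs_nonneg C, sq_nonneg π]
  linarith
end
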